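/- Zero curvature representation of the hyperbolic shifted ratio equation: let x0, x1, x2, x3, c1, c2, λ ∈ ℂ with c1² ≠ 1, c2² ≠ 1 and all of c1·x0 − x1, x0 − c1·x1, c2·x1 − x2, x1 − c2·x2, c1·x2 − x3, x2 − c1·x3, c2·x3 − x0, x3 − c2·x0 nonzero. Define the 2×2 complex matrix L(x, w, c, λ) := [[1, w − c·x], [λ(1 − c²)/(c·w − x), (w − c·x)/(c·w − x)]]. If ((c1·x0 − x1)(c1·x2 − x3))/((x1 − c2·x2)(x3 − c2·x0)) = (1 − c1²)/(1 − c2²), then L(x2, x1, c2, λ) · L(x1, x0, c1, λ) = L(x2, x3, c1, λ) · L(x3, x0, c2, λ). -/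

import Mathlib

open Matrix

/-- Transition matrix of the hyperbolic shifted ratio system. -/
noncomputable def hsrL (x w c lam : ℂ) : Matrix (Fin 2) (Fin 2) ℂ :=
  !![1, w - c * x;
     lam * (1 - c ^ 2) / (c * w - x), (w - c * x) / (c * w - x)]

set_option maxHeartbeats 1000000 in
theorem hyperbolic_shifted_ratio_zero_curvature
    (x0 x1 x2 x3 c1 c2 lam : ℂ)
    (hc1 : c1 ^ 2 ≠ 1) (hc2 : c2 ^ 2 ≠ 1)
    (h1 : c1 * x0 - x1 ≠ 0) (h2 : x0 - c1 * x1 ≠ 0)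
    (h3 : c2 * x1 - x2 ≠ 0) (h4 : x1 - c2 * x2 ≠ 0)
    (h5 : c1 * x2 - x3 ≠ 0) (h6 : x2 - c1 * x3 ≠ 0)
    (h7 : c2 * x3 - x0 ≠ 0) (h8 : x3 - c2 * x0 ≠ 0)
    (hhsr : (c1 * x0 - x1) * (c1 * x2 - x3) /
        ((x1 - c2 * x2) * (x3 - c2 * x0)) = (1 - c1 ^ 2) / (1 - c2 ^ 2)) :
    hsrL x2 x1 c2 lam * hsrL x1 x0 c1 lam =
      hsrL x2 x3 c1 lam * hsrL x3 x0 c2 lam := by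
  have h6' : c1 * x3 - x2 ≠ 0 := by intro h; apply h6; linear_combination -h
  have h8' : c2 * x0 - x3 ≠ 0 := by intro h; apply h8; linear_combination -h
  have hc2' : (1:ℂ) - c2 ^ 2 ≠ 0 := by intro h; apply hc2; linear_combination -h
  have hc1' : (1:ℂ) - c1 ^ 2 ≠ 0 := by intro h; apply hc1; linear_combination -h
  have key : (c1 * x0 - x1) * (c1 * x2 - x3) * (1 - c2 ^ 2)
      = (1 - c1 ^ 2) * ((x1 - c2 * x2) * (x3 - c2 * x0)) := by
    have := (div_eq_div_iff (mul_ne_zero h4 h8) hc2').mp hhsr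
    linear_combination this
  ext i j
  fin_cases i <;> fin_cases j <;>
    simp [hsrL, Matrix.mul_apply, Fin.sum_univ_two] <;>
    field_simp
  · linear_combination lam * key
  · have e1 : x0 * c1 - x1 ≠ 0 := by intro h; apply h1; linear_combination h
    have e2 : x0 * c2 - x3 ≠ 0 := by intro h; apply h8'; linear_combination h
    field_simp
    linear_combination x0 * key
  · linear_combination (x3*c1 - x2 + x1*c2 - x0*c1*c2) * lam * key
  · have e1 : x0 * c1 - x1 ≠ 0 := by intro h; apply h1; linear_combination h
    field_simp
    linear_combination (x1*x3 - x1*x3*lam + x0*x3*c1*lam - x0*x2 + x0*x1*c2*lam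
      - x0^2*c1*c2*lam) * key
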